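/- arXiv:2210.07520 — 2 statements merged into one kernel-verified Lean document; each statement's English description precedes it below -/
import Mathlib

section
/- If the defining ideal I(S) is generic, i.e., every variable z_1,…,z_{d+r} belongs to the support of every binomial in a minimal binomial generating set of I(S), then every element of the Apéry set AP(S,E) has a unique factorization in terms of the generators of S; in particular S is homogeneous. -/
open MvPolynomial CategoryTheory

set_option maxHeartbeats 1000000
set_option synthInstance.maxHeartbeats 400000

noncomputable section

namespace AffineSG

/-- The total degree of an exponent vector. -/
def edeg {n : ℕ} (u : Fin n →₀ ℕ) : ℕ := u.sum fun _ e => e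

/-- `ndrlGT u v` means that the monomial with exponent vector `u` is strictly greater than
the one with exponent vector `v` in the negative degree reverse lexicographic order induced by
`z_n > ⋯ > z_1` (the variable with larger index is the larger variable). -/
def ndrlGT {n : ℕ} (u v : Fin n →₀ ℕ) : Prop :=
  edeg u < edeg v ∨
    (edeg u = edeg v ∧ ∃ i : Fin n, u i < v i ∧ ∀ j : Fin n, j < i → u j = v j)

/-- `IsLM f m` : the exponent vector `m` is the leading monomial of `f` with respect to the
negative degree reverse lexicographic order. -/
def IsLM {n : ℕ} {k : Type} [Field k] (f : MvPolynomial (Fin n) k) (m : Fin n →₀ ℕ) : Prop :=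
  m ∈ f.support ∧ ∀ m' ∈ f.support, m' ≠ m → ndrlGT m m'

/-- `G` is a Gröbner (standard) basis of `I` with respect to the negative degree reverse
lexicographic order: `G ⊆ I` and the leading monomial of every nonzero element of `I` is
divisible by the leading monomial of some element of `G`. -/
def IsGroebnerBasis {n : ℕ} {k : Type} [Field k] (G : Finset (MvPolynomial (Fin n) k))
    (I : Ideal (MvPolynomial (Fin n) k)) : Prop :=
  (↑G : Set (MvPolynomial (Fin n) k)) ⊆ (I : Set (MvPolynomial (Fin n) k)) ∧
    ∀ f ∈ I, f ≠ 0 → ∃ g ∈ G, ∃ mg mf, IsLM g mg ∧ IsLM f mf ∧ mg ≤ mf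

/-- A minimal Gröbner basis: a Gröbner basis consisting of nonzero polynomials no leading
monomial of which divides the leading monomial of another element. -/
def IsMinimalGroebnerBasis {n : ℕ} {k : Type} [Field k] (G : Finset (MvPolynomial (Fin n) k))
    (I : Ideal (MvPolynomial (Fin n) k)) : Prop :=
  IsGroebnerBasis G I ∧ (0 : MvPolynomial (Fin n) k) ∉ G ∧
    ∀ g ∈ G, ∀ g' ∈ G, g ≠ g' → ∀ mg mg', IsLM g mg → IsLM g' mg' → ¬ mg ≤ mg'

/-- The toric ideal (defining ideal) attached to a family `g` of lattice points in `ℕ^d`: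
the kernel of `z_i ↦ x^{g i}`. -/
def famIdeal (k : Type) [Field k] {n d : ℕ} (g : Fin n → (Fin d → ℕ)) :
    Ideal (MvPolynomial (Fin n) k) :=
  RingHom.ker (MvPolynomial.aeval
    (fun i => MvPolynomial.monomial (Finsupp.equivFunOnFinite.symm (g i)) (1 : k)) :
      MvPolynomial (Fin n) k →ₐ[k] MvPolynomial (Fin d) k)

/-- A simplicial affine semigroup fully embedded in `ℕ^d`, minimally generated by
`gen 0, …, gen (d+r-1)`, whose set of extremal rays consists of the first `d` generators. -/
structure SimplicialAffineSemigroup (d r : ℕ) where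
  gen : Fin (d + r) → (Fin d → ℕ)
  gen_ne_zero : ∀ i, gen i ≠ 0
  li : LinearIndependent ℚ (fun (i : Fin d) (j : Fin d) => ((gen (Fin.castAdd r i) j : ℚ)))
  cone : ∀ i : Fin (d + r), ∃ c : Fin d → ℚ, (∀ j, 0 ≤ c j) ∧
    (fun j => (gen i j : ℚ)) = ∑ j : Fin d, c j • (fun l => (gen (Fin.castAdd r j) l : ℚ))
  minimal : ∀ i, gen i ∉ AddSubmonoid.closure (Set.range gen \ {gen i})

namespace SimplicialAffineSemigroup

variable {d r : ℕ}

/-- The underlying semigroup (as a set): the additive submonoid generated by the generators. -/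
def mem (S : SimplicialAffineSemigroup d r) (s : Fin d → ℕ) : Prop :=
  s ∈ AddSubmonoid.closure (Set.range S.gen)

/-- The defining ideal `I(S)` of the semigroup ring `k[S]`. -/
def definingIdeal (k : Type) [Field k] (S : SimplicialAffineSemigroup d r) :
    Ideal (MvPolynomial (Fin (d + r)) k) :=
  famIdeal k S.gen

end SimplicialAffineSemigroup

/-- The smallest degree of a monomial appearing in `f`. -/
def minDeg {n : ℕ} {k : Type} [Field k] (f : MvPolynomial (Fin n) k) : ℕ :=
  sInf (edeg '' (f.support : Set (Fin n →₀ ℕ)))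

/-- The initial form `f*` of `f`: the homogeneous component of least degree of `f`. -/
def initialForm {n : ℕ} {k : Type} [Field k] (f : MvPolynomial (Fin n) k) :
    MvPolynomial (Fin n) k :=
  MvPolynomial.homogeneousComponent (minDeg f) f

/-- `I*`, the ideal generated by the initial forms of the elements of `I`;
one has `gr_𝔪(A/I) ≅ A/I*`. -/
def starIdeal {n : ℕ} {k : Type} [Field k] (I : Ideal (MvPolynomial (Fin n) k)) :
    Ideal (MvPolynomial (Fin n) k) :=
  Ideal.span { g | ∃ f ∈ I, f ≠ 0 ∧ g = initialForm f }

/-- A finite set `J ⊆ I` is a standard basis of `I` if the initial forms of its elements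
generate `I*`. -/
def IsStandardBasis {n : ℕ} {k : Type} [Field k] (J : Finset (MvPolynomial (Fin n) k))
    (I : Ideal (MvPolynomial (Fin n) k)) : Prop :=
  (↑J : Set (MvPolynomial (Fin n) k)) ⊆ (I : Set (MvPolynomial (Fin n) k)) ∧
    starIdeal I = Ideal.span (initialForm '' (↑J : Set (MvPolynomial (Fin n) k)))

/-- The ideal of a commutative ring generated by the images of the variables under the
quotient map; for `A/I` this is the distinguished (graded) maximal ideal `𝔪`. -/
def quotMax {n : ℕ} {k : Type} [Field k] (I : Ideal (MvPolynomial (Fin n) k)) :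
    Ideal (MvPolynomial (Fin n) k ⧸ I) :=
  Ideal.map (Ideal.Quotient.mk I) (Ideal.span (Set.range (MvPolynomial.X : Fin n → MvPolynomial (Fin n) k)))

/-- `J` is a reduction ideal of `I`: `J ⊆ I` and `J I^n = I^{n+1}` for all large `n`. -/
def IsReductionIdeal {R : Type} [CommRing R] (J I : Ideal R) : Prop :=
  J ≤ I ∧ ∃ N : ℕ, ∀ n ≥ N, J * I ^ n = I ^ (n + 1)

/-- A commutative ring `R` with distinguished (maximal) ideal `m` is Cohen–Macaulay if
there is a regular sequence on `R` consisting of elements of `m` whose length is the Krull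
dimension of `R`. -/
def IsCM (R : Type) [CommRing R] (m : Ideal R) : Prop :=
  ∃ rs : List R, (∀ x ∈ rs, x ∈ m) ∧ RingTheory.Sequence.IsRegular R rs ∧
    ringKrullDim R = rs.length

/-- The depth of `R` with respect to the ideal `m`: the supremum of the lengths of regular
sequences on `R` consisting of elements of `m`. -/
def ringDepth (R : Type) [CommRing R] (m : Ideal R) : ℕ∞ :=
  sSup ((fun rs : List R => (rs.length : ℕ∞)) ''
    { rs : List R | (∀ x ∈ rs, x ∈ m) ∧ RingTheory.Sequence.IsRegular R rs })

/-- The length of a module, realized as the Krull dimension of its lattice of submodules. -/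
def moduleLength (R M : Type) [CommRing R] [AddCommGroup M] [Module R M] : WithBot ℕ∞ :=
  Order.krullDim (Submodule R M)

/-- The `i`-th Betti number of the `R`-module `M` with respect to the distinguished maximal
ideal `m`, namely the length of `Tor_i^R(R/m, M)`. -/
def bettiNumber (R : Type) [CommRing R] (m : Ideal R) (M : Type) [AddCommGroup M] [Module R M]
    (i : ℕ) : WithBot ℕ∞ :=
  moduleLength R (((Tor (ModuleCat R) i).obj (ModuleCat.of R (R ⧸ m))).obj (ModuleCat.of R M))

/-- The height of an ideal. -/
def idealHeight {R : Type} [CommRing R] (I : Ideal R) : ℕ∞ :=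
  sInf { n : ℕ∞ | ∃ p : PrimeSpectrum R, I ≤ p.asIdeal ∧ n = Order.height p }

/-- The minimal number of generators of an ideal. -/
def mu {R : Type} [CommRing R] (I : Ideal R) : ℕ∞ :=
  sInf { n : ℕ∞ | ∃ s : Finset R, (s.card : ℕ∞) = n ∧ Ideal.span (↑s : Set R) = I }

/-- An ideal `I` of a polynomial ring is a complete intersection if its height equals its
minimal number of generators. -/
def IsCompleteIntersectionIdeal {R : Type} [CommRing R] (I : Ideal R) : Prop :=
  idealHeight I = mu I


/-- `p` is a factorization of `s` in terms of the generating family `g`. -/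
def FamFactorization {n d : ℕ} (g : Fin n → (Fin d → ℕ)) (p : Fin n → ℕ) (s : Fin d → ℕ) :
    Prop :=
  ∑ i, p i • g i = s

/-- `s` belongs to the affine semigroup generated by the family `g`. -/
def FamMem {n d : ℕ} (g : Fin n → (Fin d → ℕ)) (s : Fin d → ℕ) : Prop :=
  ∃ p, FamFactorization g p s

/-- `s` belongs to the Apéry set `AP(S,E)` of the semigroup generated by `g`, where the set of
extremal rays `E` consists of the first `d` members of the family. -/
def FamApery {d m : ℕ} (g : Fin (d + m) → (Fin d → ℕ)) (s : Fin d → ℕ) : Prop :=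
  FamMem g s ∧ ∀ i : Fin d, ¬ ∃ t, FamMem g t ∧ t + g (Fin.castAdd m i) = s

/-- The semigroup generated by `g` (first `d` members extremal rays) is homogeneous: every
nonzero element of the Apéry set with respect to the extremal rays has all its factorizations
of the same length. -/
def FamHomogeneous {d m : ℕ} (g : Fin (d + m) → (Fin d → ℕ)) : Prop :=
  ∀ s, FamApery g s → s ≠ 0 → ∀ p q, FamFactorization g p s → FamFactorization g q s →
    ∑ i, p i = ∑ i, q i

/-- `p` is a maximal factorization: no factorization of the same semigroup element has
strictly larger length (so the length of `p` is the order of the element). -/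
def IsMaximalFactorization {n d : ℕ} (g : Fin n → (Fin d → ℕ)) (p : Fin n → ℕ) : Prop :=
  ∀ q, FamFactorization g q (∑ i, p i • g i) → ∑ i, q i ≤ ∑ i, p i

/-- The projection `π_e` killing the `e` smallest variables `z_1, …, z_e`. -/
def proj (k : Type) [Field k] (n e : ℕ) :
    MvPolynomial (Fin n) k →ₐ[k] MvPolynomial (Fin (n - e)) k :=
  MvPolynomial.aeval fun j : Fin n =>
    if hj : e ≤ (j : ℕ) then
      MvPolynomial.X (⟨(j : ℕ) - e, by have := j.isLt; omega⟩ : Fin (n - e))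
    else 0

/-- The generating family of the extension `S_b = λS ∪ {μb}` of the semigroup generated by
`g`, where `b = Σ α_i g i`. -/
def extFam {d r : ℕ} (g : Fin (d + r) → (Fin d → ℕ)) (α : Fin (d + r) → ℕ) (lam mu : ℕ) :
    Fin (d + (r + 1)) → (Fin d → ℕ) :=
  Fin.snoc (fun i => lam • g i) (mu • ∑ i, α i • g i)

/-- Generating families of simplicial affine semigroups obtained from `ℕ^d` by a finite
sequence of nice extensions. -/
inductive NiceSeq (d : ℕ) : ∀ r : ℕ, (Fin (d + r) → (Fin d → ℕ)) → Prop
  | base : NiceSeq d 0 (fun i j => if (i : ℕ) = (j : ℕ) then 1 else 0)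
  | step {r : ℕ} {g : Fin (d + r) → (Fin d → ℕ)} (α : Fin (d + r) → ℕ) (lam mu : ℕ)
      (hg : NiceSeq d r g) (hco : Nat.Coprime lam mu) (hnice : lam ≤ ∑ i, α i) :
      NiceSeq d (r + 1) (extFam g α lam mu)


/-- The ideal of `A/I` generated by the images of the variables corresponding to the
extremal rays (the first `d` variables). -/
def quotExtremal (d r : ℕ) (k : Type) [Field k] (I : Ideal (MvPolynomial (Fin (d + r)) k)) :
    Ideal (MvPolynomial (Fin (d + r)) k ⧸ I) :=
  Ideal.map (Ideal.Quotient.mk I)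
    (Ideal.span (Set.range fun i : Fin d =>
      (MvPolynomial.X (Fin.castAdd r i) : MvPolynomial (Fin (d + r)) k)))

end AffineSG

section Helpers

open AffineSG MvPolynomial

lemma GIH.prod_monomial_one {σ ι : Type*} {k : Type} [Field k] (s : Finset ι)
    (u : ι → (σ →₀ ℕ)) :
    ∏ i ∈ s, MvPolynomial.monomial (u i) (1:k) = MvPolynomial.monomial (∑ i ∈ s, u i) 1 := by
  classical
  induction s using Finset.cons_induction with
  | empty => simp
  | cons a s ha ih => rw [Finset.prod_cons, Finset.sum_cons, ih, monomial_mul, one_mul]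

lemma GIH.aeval_mono {n d : ℕ} {k : Type} [Field k] (g : Fin n → Fin d → ℕ) (P : Fin n →₀ ℕ) :
    MvPolynomial.aeval (fun i => MvPolynomial.monomial (Finsupp.equivFunOnFinite.symm (g i)) (1:k))
      (MvPolynomial.monomial P (1:k)) =
    MvPolynomial.monomial (∑ i, P i • Finsupp.equivFunOnFinite.symm (g i)) 1 := by
  rw [aeval_monomial, map_one, one_mul,
    Finsupp.prod_fintype _ _ (fun i => pow_zero _)]
  simp_rw [monomial_pow, one_pow]
  rw [GIH.prod_monomial_one]

lemma GIH.apery_extremal_zero {d m : ℕ} (g : Fin (d + m) → (Fin d → ℕ)) (s : Fin d → ℕ)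
    (hs : FamApery g s) (p : Fin (d + m) → ℕ) (hp : FamFactorization g p s) (i : Fin d) :
    p (Fin.castAdd m i) = 0 := by
  classical
  by_contra h
  set j0 := Fin.castAdd m i with hj0
  set p' := Function.update p j0 (p j0 - 1) with hp'
  apply hs.2 i
  refine ⟨∑ l, p' l • g l, ⟨p', rfl⟩, ?_⟩
  have h1 : ∑ l, p' l • g l = (p j0 - 1) • g j0 + ∑ l ∈ Finset.univ \ {j0}, p l • g l := by
    rw [hp']
    rw [← Finset.sum_update_of_mem (Finset.mem_univ j0) (fun l => p l • g l) ((p j0 - 1) • g j0)]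
    apply Finset.sum_congr rfl
    intro x _
    by_cases hx : x = j0
    · subst hx; simp
    · simp [Function.update_of_ne hx]
  have h2 : ∑ l, p l • g l = p j0 • g j0 + ∑ l ∈ Finset.univ \ {j0}, p l • g l := by
    rw [← Finset.sum_update_of_mem (Finset.mem_univ j0) (fun l => p l • g l) (p j0 • g j0)]
    apply Finset.sum_congr rfl
    intro x _
    by_cases hx : x = j0
    · subst hx; simp
    · simp [Function.update_of_ne hx]
  rw [h1, ← hp, h2]
  have hstep : (p j0 - 1) • g j0 + g j0 = p j0 • g j0 := by
    rw [← succ_nsmul, Nat.sub_add_cancel (Nat.one_le_iff_ne_zero.mpr h)]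
  rw [add_assoc, add_comm (∑ l ∈ Finset.univ \ {j0}, p l • g l) (g j0), ← add_assoc, hstep]

lemma GIH.fact_exp {n d : ℕ} (g : Fin n → Fin d → ℕ) (p : Fin n → ℕ) (s : Fin d → ℕ)
    (hp : FamFactorization g p s) :
    ∑ i, (Finsupp.equivFunOnFinite.symm p) i • Finsupp.equivFunOnFinite.symm (g i)
      = Finsupp.equivFunOnFinite.symm s := by
  apply Finsupp.ext
  intro j
  rw [Finsupp.finset_sum_apply]
  simp only [Finsupp.smul_apply, Finsupp.coe_equivFunOnFinite_symm, smul_eq_mul]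
  have := congrFun hp j
  rw [Finset.sum_apply] at this
  simpa using this

end Helpers

open AffineSG MvPolynomial in
/-- If the defining ideal `I(S)` is generic — every variable lies in the support of every
binomial in a minimal binomial generating set — then every element of the Apéry set
`AP(S,E)` has a unique factorization; in particular `S` is homogeneous. -/
theorem generic_implies_homogeneous {d r : ℕ} {k : Type} [Field k]
    (S : SimplicialAffineSemigroup d r)
    (B : Finset (MvPolynomial (Fin (d + r)) k))
    (hbin : ∀ f ∈ B, ∃ p q : Fin (d + r) →₀ ℕ, p ≠ q ∧
      f = MvPolynomial.monomial p 1 - MvPolynomial.monomial q 1)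
    (hspan : Ideal.span (↑B : Set (MvPolynomial (Fin (d + r)) k)) = S.definingIdeal k)
    (hmin : ∀ f ∈ B,
      Ideal.span ((↑B : Set (MvPolynomial (Fin (d + r)) k)) \ {f}) ≠ S.definingIdeal k)
    (hgeneric : ∀ f ∈ B, ∀ j : Fin (d + r), j ∈ f.vars) :
    (∀ s : Fin d → ℕ, FamApery S.gen s →
      ∀ p q : Fin (d + r) → ℕ, FamFactorization S.gen p s → FamFactorization S.gen q s →
        p = q) ∧
      FamHomogeneous S.gen := by
  classical
  have key : ∀ s : Fin d → ℕ, FamApery S.gen s →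
      ∀ p q : Fin (d + r) → ℕ, FamFactorization S.gen p s → FamFactorization S.gen q s →
        p = q := by
    intro s hs p q hp hq
    by_contra hne
    -- d is positive, otherwise all generators would be zero
    obtain ⟨i0, hi0⟩ : ∃ i, p i ≠ q i := by
      by_contra h; push_neg at h; exact hne (funext h)
    have hd : 0 < d := by
      rcases Nat.eq_zero_or_pos d with h0 | h
      · exfalso
        apply S.gen_ne_zero i0
        funext j
        exact absurd j.isLt (by omega)
      · exact h
    set P := Finsupp.equivFunOnFinite.symm p with hP
    set Q := Finsupp.equivFunOnFinite.symm q with hQ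
    have hPQ : P ≠ Q := fun h => hne (Finsupp.equivFunOnFinite.symm.injective h)
    -- the binomial z^P - z^Q lies in the defining ideal
    have hker : (monomial P (1:k) - monomial Q 1) ∈ S.definingIdeal k := by
      rw [SimplicialAffineSemigroup.definingIdeal, famIdeal, RingHom.mem_ker, map_sub,
        GIH.aeval_mono, GIH.aeval_mono, GIH.fact_exp _ _ _ hp, GIH.fact_exp _ _ _ hq, sub_self]
    rw [← hspan] at hker
    obtain ⟨h, -, hh⟩ := Submodule.mem_span_finset.mp hker
    -- P belongs to the support of z^P - z^Q
    have hPsupp : P ∈ (monomial P (1:k) - monomial Q 1).support := by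
      rw [MvPolynomial.mem_support_iff, MvPolynomial.coeff_sub, coeff_monomial, coeff_monomial,
        if_pos rfl, if_neg (fun hqp => hPQ hqp.symm), sub_zero]
      exact one_ne_zero
    rw [← hh] at hPsupp
    obtain ⟨f, hfB, hPf⟩ := Finset.mem_biUnion.mp (MvPolynomial.support_sum hPsupp)
    obtain ⟨a, b, hab, hf⟩ := hbin f hfB
    have hPf' : P ∈ (h f * f).support := by rwa [smul_eq_mul] at hPf
    have hsub : f.support ⊆ {a, b} := by
      rw [hf]
      refine (MvPolynomial.support_sub _ _ _).trans ?_
      rw [support_monomial, support_monomial, if_neg (one_ne_zero (α := k)),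
        if_neg (one_ne_zero (α := k))]
      intro x hx
      simp only [Finset.mem_union, Finset.mem_singleton] at hx
      simp only [Finset.mem_insert, Finset.mem_singleton]
      exact hx
    obtain ⟨c, hc, e, he, hce⟩ := Finset.mem_add.mp (MvPolynomial.support_mul _ _ hPf')
    have heab : e = a ∨ e = b := by
      have := hsub he
      simpa only [Finset.mem_insert, Finset.mem_singleton] using this
    -- the two monomials of f have the same image under the semigroup map
    have hfI : f ∈ S.definingIdeal k := by
      rw [← hspan]; exact Ideal.subset_span hfB
    have hAB : (∑ i, a i • Finsupp.equivFunOnFinite.symm (S.gen i))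
        = ∑ i, b i • Finsupp.equivFunOnFinite.symm (S.gen i) := by
      rw [SimplicialAffineSemigroup.definingIdeal, famIdeal, RingHom.mem_ker, hf, map_sub,
        GIH.aeval_mono, GIH.aeval_mono, sub_eq_zero] at hfI
      exact monomial_left_injective (one_ne_zero (α := k)) hfI
    have hABfun : ∀ j : Fin d, ∑ i, a i * S.gen i j = ∑ i, b i * S.gen i j := by
      intro j
      have := DFunLike.congr_fun hAB j
      rw [Finsupp.finset_sum_apply, Finsupp.finset_sum_apply] at this
      simpa only [Finsupp.smul_apply, Finsupp.coe_equivFunOnFinite_symm,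
        smul_eq_mul] using this
    -- extremal coordinates of P vanish
    have hPext : ∀ i : Fin d, P (Fin.castAdd r i) = 0 := by
      intro i
      have := GIH.apery_extremal_zero S.gen s hs p hp i
      simpa [hP, Finsupp.coe_equivFunOnFinite_symm] using this
    have hcefun : ∀ i : Fin (d + r), c i + e i = p i := by
      intro i
      have := DFunLike.congr_fun hce i
      simpa [Finsupp.add_apply, hP, Finsupp.coe_equivFunOnFinite_symm] using this
    have heext : ∀ i : Fin d, e (Fin.castAdd r i) = 0 := by
      intro i
      have h1 := hcefun (Fin.castAdd r i)
      have h2 : p (Fin.castAdd r i) = 0 := by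
        have := hPext i
        simpa [hP, Finsupp.coe_equivFunOnFinite_symm] using this
      omega
    -- the other monomial of f
    set e' : Fin (d + r) →₀ ℕ := if e = a then b else a with he'
    have hee' : ∀ j : Fin d, ∑ i, e i * S.gen i j = ∑ i, e' i * S.gen i j := by
      intro j
      rcases heab with hea | heb
      · rw [he', if_pos hea, hea]; exact hABfun j
      · have hena : e ≠ a := fun hea => hab (hea.symm.trans heb)
        rw [he', if_neg hena, heb]; exact (hABfun j).symm
    -- genericity: every extremal variable appears in e'
    have he'ext : ∀ i : Fin d, e' (Fin.castAdd r i) ≠ 0 := by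
      intro i
      obtain ⟨m, hmf, hmj⟩ := (MvPolynomial.mem_vars _).mp (hgeneric f hfB (Fin.castAdd r i))
      have hmj' : m (Fin.castAdd r i) ≠ 0 := Finsupp.mem_support_iff.mp hmj
      have hmab : m = a ∨ m = b := by
        have := hsub hmf
        simpa only [Finset.mem_insert, Finset.mem_singleton] using this
      have hme : m ≠ e := by
        intro hme
        exact hmj' (hme ▸ heext i)
      rcases hmab with hma | hmb
      · have : e ≠ a := fun heq => hme (hma.trans heq.symm)
        rw [he', if_neg this, ← hma]; exact hmj'
      · have : e = a := by
          rcases heab with h1 | h1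
          · exact h1
          · exact absurd (hmb.trans h1.symm) hme
        rw [he', if_pos this, ← hmb]; exact hmj'
    -- build the new factorization c + e' of s
    set q1 : Fin (d + r) → ℕ := fun i => c i + e' i with hq1
    have hq1fact : FamFactorization S.gen q1 s := by
      funext j
      rw [Finset.sum_apply]
      simp only [Pi.smul_apply, smul_eq_mul, hq1]
      have expand : ∑ i, (c i + e' i) * S.gen i j
          = ∑ i, c i * S.gen i j + ∑ i, e' i * S.gen i j := by
        rw [← Finset.sum_add_distrib]
        apply Finset.sum_congr rfl
        intro i _
        ring
      rw [expand, ← hee' j]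
      have expand2 : ∑ i, c i * S.gen i j + ∑ i, e i * S.gen i j
          = ∑ i, (c i + e i) * S.gen i j := by
        rw [← Finset.sum_add_distrib]
        apply Finset.sum_congr rfl
        intro i _
        ring
      rw [expand2]
      have : ∑ i, (c i + e i) * S.gen i j = ∑ i, p i * S.gen i j := by
        apply Finset.sum_congr rfl
        intro i _
        rw [hcefun i]
      rw [this]
      have := congrFun hp j
      rw [Finset.sum_apply] at this
      simpa using this
    -- contradiction with the Apéry property
    set i1 : Fin d := ⟨0, hd⟩ with hi1
    have := GIH.apery_extremal_zero S.gen s hs q1 hq1fact i1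
    have hq1pos : q1 (Fin.castAdd r i1) ≠ 0 := by
      simp only [hq1]
      have := he'ext i1
      omega
    exact hq1pos this
  refine ⟨key, ?_⟩
  intro s hs hsne p q hp hq
  rw [key s hs p q hp hq]
end
end

section
/- The defining ideal 𝔭 of the monomial curve defined by the numerical semigroup S minimally generated by the geometric sequence a^r, a^{r−1}b, …, ab^{r−1}, b^r is minimally generated by the r binomials P_1 = z_2^a − z_1^b, P_2 = z_3^a − z_2^b, …, P_r = z_{r+1}^a − z_r^b. -/
open MvPolynomial CategoryTheory

set_option maxHeartbeats 1000000
set_option synthInstance.maxHeartbeats 400000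

noncomputable section

/-- The defining ideal `𝔭` of the monomial curve given by the numerical semigroup minimally
generated by the geometric sequence `m_i = a^{r+1-i} b^{i-1}`, `i = 1, …, r+1`:
the kernel of `z_i ↦ t^{m_i}`. -/
noncomputable def geomKer (k : Type) [Field k] (a b r : ℕ) :
    Ideal (MvPolynomial (Fin (r + 1)) k) :=
  RingHom.ker (MvPolynomial.aeval
    (fun i : Fin (r + 1) =>
      (Polynomial.X : Polynomial k) ^ (a ^ (r - (i : ℕ)) * b ^ (i : ℕ))) :
        MvPolynomial (Fin (r + 1)) k →ₐ[k] Polynomial k)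

/-- The binomials `P_i = z_{i+1}^a − z_i^b`, `i = 1, …, r`. -/
noncomputable def geomP (k : Type) [Field k] (a b r : ℕ) (i : Fin r) :
    MvPolynomial (Fin (r + 1)) k :=
  MvPolynomial.X i.succ ^ a - MvPolynomial.X i.castSucc ^ b
namespace GeomAux

def W {n : ℕ} (c : Fin n → ℕ) (u : Fin n →₀ ℕ) : ℕ := ∑ j, u j * c j

lemma W_add {n : ℕ} (c : Fin n → ℕ) (u v : Fin n →₀ ℕ) : W c (u + v) = W c u + W c v := by
  simp [W, Finsupp.add_apply, add_mul, Finset.sum_add_distrib]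

lemma W_single {n : ℕ} (c : Fin n → ℕ) (j : Fin n) (x : ℕ) :
    W c (Finsupp.single j x) = x * c j := by
  simp [W, Finsupp.single_apply]

variable {k : Type} [Field k] (a b r : ℕ)

/-- uniqueness of normal-form representations -/
lemma key_inj (a b : ℕ) (ha : 0 < a) (hco : Nat.Coprime a b) :
    ∀ (n : ℕ) (u v : Fin (n+1) → ℕ),
      (∀ j : Fin (n+1), 0 < (j:ℕ) → u j < a) → (∀ j : Fin (n+1), 0 < (j:ℕ) → v j < a) →
      (∑ j, u j * (a ^ (n - (j:ℕ)) * b ^ (j:ℕ))) = (∑ j, v j * (a ^ (n - (j:ℕ)) * b ^ (j:ℕ))) →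
      u = v := by
  intro n
  induction n with
  | zero =>
    intro u v _ _ h
    funext j
    fin_cases j
    simpa using h
  | succ n ih =>
    intro u v hu hv h
    rw [show (∑ j, u j * (a ^ (n + 1 - (j:ℕ)) * b ^ (j:ℕ))) = _ from Fin.sum_univ_castSucc _,
       show (∑ j, v j * (a ^ (n + 1 - (j:ℕ)) * b ^ (j:ℕ))) = _ from Fin.sum_univ_castSucc _] at h
    have hc : ∀ w : Fin (n+2) → ℕ,
        (∑ j : Fin (n+1), w j.castSucc * (a ^ (n + 1 - (j.castSucc:ℕ)) * b ^ ((j.castSucc:ℕ))))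
          = a * ∑ j : Fin (n+1), w j.castSucc * (a ^ (n - (j:ℕ)) * b ^ (j:ℕ)) := by
      intro w
      rw [Finset.mul_sum]
      refine Finset.sum_congr rfl fun j _ => ?_
      have h1 : n + 1 - (j.castSucc : ℕ) = (n - (j:ℕ)) + 1 := by
        have := j.isLt; simp [Fin.coe_castSucc]; omega
      rw [h1, Fin.coe_castSucc, pow_succ]
      ring
    rw [hc u, hc v] at h
    set Su := ∑ j : Fin (n+1), u j.castSucc * (a ^ (n - (j:ℕ)) * b ^ (j:ℕ)) with hSu
    set Sv := ∑ j : Fin (n+1), v j.castSucc * (a ^ (n - (j:ℕ)) * b ^ (j:ℕ)) with hSv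
    set x := u (Fin.last (n+1)) with hx
    set y := v (Fin.last (n+1)) with hy
    have hxa : x < a := hu _ (by simp)
    have hya : y < a := hv _ (by simp)
    have hsimp : a * Su + x * (a ^ (n + 1 - ((Fin.last (n+1)):ℕ)) * b ^ ((Fin.last (n+1)):ℕ))
        = a * Su + x * b ^ (n+1) := by
      simp
    have h' : a * Su + x * b ^ (n+1) = a * Sv + y * b ^ (n+1) := by
      simpa using h
    have hz : (a:ℤ) * Su + x * (b:ℤ) ^ (n+1) = a * Sv + y * (b:ℤ) ^ (n+1) := by
      exact_mod_cast h'
    have hdvd : (a:ℤ) ∣ ((x:ℤ) - y) * (b:ℤ) ^ (n+1) :=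
      ⟨(Sv:ℤ) - Su, by linear_combination hz⟩
    have hcop : IsCoprime (a:ℤ) ((b:ℤ) ^ (n+1)) := by
      have : IsCoprime (a:ℤ) (b:ℤ) := Nat.isCoprime_iff_coprime.mpr hco
      exact this.pow_right
    have hdvd2 : (a:ℤ) ∣ ((x:ℤ) - y) := hcop.dvd_of_dvd_mul_right hdvd
    have hxy : (x:ℤ) - y = 0 := by
      refine Int.eq_zero_of_abs_lt_dvd hdvd2 ?_
      rw [abs_lt]
      constructor <;> [push_cast; push_cast] <;> omega
    have hxy' : x = y := by omega
    have hS : Su = Sv := by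
      have h2 := h'
      rw [hxy'] at h2
      exact Nat.eq_of_mul_eq_mul_left ha (Nat.add_right_cancel h2)
    have hind : (fun j : Fin (n+1) => u j.castSucc) = (fun j => v j.castSucc) := by
      refine ih _ _ (fun j hj => hu _ (by simpa using hj)) (fun j hj => hv _ (by simpa using hj)) hS
    funext j
    refine Fin.lastCases ?_ ?_ j
    · exact hxy'
    · intro i
      exact congrFun hind i


/-- the exponents -/
def mwt (j : Fin (r+1)) : ℕ := a ^ (r - (j:ℕ)) * b ^ (j:ℕ)

/-- the evaluation map -/
noncomputable def φm (k : Type) [Field k] (a b r : ℕ) : MvPolynomial (Fin (r+1)) k →ₐ[k] Polynomial k :=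
  MvPolynomial.aeval fun i : Fin (r + 1) =>
      (Polynomial.X : Polynomial k) ^ (a ^ (r - (i : ℕ)) * b ^ (i : ℕ))

lemma geomKer_eq : geomKer k a b r = RingHom.ker (φm k a b r) := rfl

lemma aeval_monomial_eq (c : k) (u : Fin (r+1) →₀ ℕ) :
    φm k a b r (monomial u c) = Polynomial.C c * Polynomial.X ^ (W (mwt a b r) u) := by
  rw [φm, aeval_monomial]
  simp only [Polynomial.algebraMap_eq]
  congr 1
  · rw [Finsupp.prod_fintype _ _ (fun i => pow_zero _)]
    simp_rw [← pow_mul]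
    rw [Finset.prod_pow_eq_pow_sum]
    congr 1
    rw [W]
    exact Finset.sum_congr rfl fun j _ => by rw [mwt]; ring


lemma step_mem (i : Fin r) (s : Fin (r+1) →₀ ℕ) :
    (monomial (s + Finsupp.single i.succ a) 1 - monomial (s + Finsupp.single i.castSucc b) 1 :
      MvPolynomial (Fin (r+1)) k) ∈ Ideal.span (Set.range (geomP k a b r)) := by
  have heq : (monomial (s + Finsupp.single i.succ a) 1
      - monomial (s + Finsupp.single i.castSucc b) 1 : MvPolynomial (Fin (r+1)) k)
      = monomial s 1 * geomP k a b r i := by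
    rw [geomP, mul_sub, X_pow_eq_monomial, X_pow_eq_monomial, monomial_mul, monomial_mul,
      one_mul]
  rw [heq]
  exact Ideal.mul_mem_left _ _ (Ideal.subset_span ⟨i, rfl⟩)

lemma exp_eq (i : Fin r) :
    mwt a b r i.succ * a = mwt a b r i.castSucc * b := by
  have hi := i.isLt
  rw [mwt, mwt, Fin.val_succ, Fin.coe_castSucc]
  have h1 : r - (i:ℕ) = (r - ((i:ℕ)+1)) + 1 := by omega
  rw [h1, pow_succ, pow_succ]
  ring

lemma reduce (ha : 0 < a) : ∀ (N : ℕ) (u : Fin (r+1) →₀ ℕ),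
    W (fun j => (b+1) ^ (j:ℕ)) u < N →
    ∃ v : Fin (r+1) →₀ ℕ, (∀ j : Fin (r+1), 0 < (j:ℕ) → v j < a) ∧
      W (mwt a b r) v = W (mwt a b r) u ∧
      (monomial u 1 - monomial v 1 : MvPolynomial (Fin (r+1)) k) ∈
        Ideal.span (Set.range (geomP k a b r)) := by
  intro N
  induction N with
  | zero => intro u hu; omega
  | succ N ih =>
    intro u hu
    by_cases hnorm : ∀ j : Fin (r+1), 0 < (j:ℕ) → u j < a
    · exact ⟨u, hnorm, rfl, by simp⟩
    · push_neg at hnorm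
      obtain ⟨j, hj0, hja⟩ := hnorm
      have hjr : (j:ℕ) - 1 < r := by have := j.isLt; omega
      set i : Fin r := ⟨(j:ℕ) - 1, hjr⟩ with hidef
      have hij : i.succ = j := by
        apply Fin.ext
        simp [hidef]
        omega
      have hle : Finsupp.single j a ≤ u := Finsupp.single_le_iff.mpr hja
      set s := u - Finsupp.single j a with hsdef
      have hs : s + Finsupp.single j a = u := tsub_add_cancel_of_le hle
      set u' := s + Finsupp.single i.castSucc b with hu'def
      have hMdec : W (fun j => (b+1) ^ (j:ℕ)) u' < W (fun j => (b+1) ^ (j:ℕ)) u := by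
        rw [hu'def, ← hs, W_add, W_add, W_single, W_single]
        have hlt : b * (b+1) ^ ((i.castSucc:ℕ)) < a * (b+1) ^ ((j:ℕ)) := by
          rw [Fin.coe_castSucc, ← hij, Fin.val_succ, pow_succ]
          have hp : (0:ℕ) < (b+1) ^ (i:ℕ) := Nat.pow_pos (by omega)
          calc b * (b+1) ^ (i:ℕ) < (b+1) ^ (i:ℕ) * (b+1) := by nlinarith
            _ ≤ a * ((b+1) ^ (i:ℕ) * (b+1)) := Nat.le_mul_of_pos_left _ ha
        exact Nat.add_lt_add_left hlt _
      obtain ⟨v, hv1, hv2, hv3⟩ := ih u' (by omega)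
      refine ⟨v, hv1, ?_, ?_⟩
      · rw [hv2, hu'def, ← hs, W_add, W_add, W_single, W_single, ← hij, mul_comm b,
          mul_comm a, exp_eq]
      · have hsplit : (monomial u 1 - monomial v 1 : MvPolynomial (Fin (r+1)) k)
            = (monomial u 1 - monomial u' 1) + (monomial u' 1 - monomial v 1) := by ring
        rw [hsplit]
        refine Ideal.add_mem _ ?_ hv3
        rw [← hs, ← hij, hu'def]
        exact step_mem a b r i s


lemma normal_zero (ha : 0 < a) (hco : Nat.Coprime a b)
    (n : MvPolynomial (Fin (r+1)) k)
    (hn : ∀ u ∈ n.support, ∀ j : Fin (r+1), 0 < (j:ℕ) → u j < a)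
    (h0 : φm k a b r n = 0) : n = 0 := by
  rw [MvPolynomial.eq_zero_iff]
  intro u
  by_cases hu : u ∈ n.support
  · have hrep : (∑ v ∈ n.support, monomial v (coeff v n) : MvPolynomial (Fin (r+1)) k) = n :=
      support_sum_monomial_coeff n
    have hev : (0 : Polynomial k) = ∑ v ∈ n.support,
        Polynomial.C (coeff v n) * Polynomial.X ^ (W (mwt a b r) v) := by
      conv_lhs => rw [← h0]
      conv_lhs => rw [← hrep]
      rw [map_sum]
      exact Finset.sum_congr rfl fun v _ => aeval_monomial_eq a b r _ _
    have hco2 := congrArg (fun p => Polynomial.coeff p (W (mwt a b r) u)) hev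
    simp only [Polynomial.coeff_zero, Polynomial.finset_sum_coeff, Polynomial.coeff_C_mul,
      Polynomial.coeff_X_pow] at hco2
    rw [Finset.sum_eq_single u] at hco2
    · simpa using hco2.symm
    · intro v hv hvu
      have hWne : W (mwt a b r) u ≠ W (mwt a b r) v := by
        intro hW
        apply hvu
        have := key_inj a b ha hco r (fun j => v j) (fun j => u j)
          (hn v hv) (hn u hu) ?_
        · exact Finsupp.ext fun j => congrFun this j
        · rw [show (∑ j, v j * (a ^ (r - (j:ℕ)) * b ^ (j:ℕ))) = W (mwt a b r) v from rfl,
            show (∑ j, u j * (a ^ (r - (j:ℕ)) * b ^ (j:ℕ))) = W (mwt a b r) u from rfl, hW]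
      simp [hWne]
    · intro h; exact absurd hu h
  · exact MvPolynomial.notMem_support_iff.mp hu

lemma nf_exists (ha : 0 < a) (f : MvPolynomial (Fin (r+1)) k) :
    ∃ n : MvPolynomial (Fin (r+1)) k,
      (∀ u ∈ n.support, ∀ j : Fin (r+1), 0 < (j:ℕ) → u j < a) ∧
      f - n ∈ Ideal.span (Set.range (geomP k a b r)) := by
  induction f using MvPolynomial.induction_on' with
  | monomial u c =>
    obtain ⟨v, hv1, -, hv3⟩ := reduce (k := k) a b r ha (W (fun j => (b+1) ^ (j:ℕ)) u + 1) u
      (Nat.lt_succ_self _)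
    refine ⟨monomial v c, ?_, ?_⟩
    · intro w hw
      have : w = v := by
        by_cases hc : c = 0 <;> simp [MvPolynomial.support_monomial, hc] at hw
        exact hw.symm
      rw [this]
      exact hv1
    · have : (monomial u c - monomial v c : MvPolynomial (Fin (r+1)) k)
          = MvPolynomial.C c * (monomial u 1 - monomial v 1) := by
        rw [mul_sub, MvPolynomial.C_mul_monomial, MvPolynomial.C_mul_monomial, mul_one]
      rw [this]
      exact Ideal.mul_mem_left _ _ hv3
  | add p q hp hq =>
    obtain ⟨np, hnp1, hnp2⟩ := hp
    obtain ⟨nq, hnq1, hnq2⟩ := hq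
    refine ⟨np + nq, ?_, ?_⟩
    · intro u hu
      rcases Finset.mem_union.mp (MvPolynomial.support_add hu) with h | h
      · exact hnp1 u h
      · exact hnq1 u h
    · have : p + q - (np + nq) = (p - np) + (q - nq) := by ring
      rw [this]
      exact Ideal.add_mem _ hnp2 hnq2

lemma span_le_ker : Ideal.span (Set.range (geomP k a b r)) ≤ geomKer k a b r := by
  rw [Ideal.span_le]
  rintro _ ⟨i, rfl⟩
  show geomP k a b r i ∈ RingHom.ker (φm k a b r)
  rw [RingHom.mem_ker, geomP, map_sub, map_pow, map_pow]
  rw [show φm k a b r (X i.succ) = Polynomial.X ^ (mwt a b r i.succ) from aeval_X _ _,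
    show φm k a b r (X i.castSucc) = Polynomial.X ^ (mwt a b r i.castSucc) from aeval_X _ _,
    ← pow_mul, ← pow_mul, exp_eq a b r i, sub_self]

lemma span_eq_ker (ha : 0 < a) (hco : Nat.Coprime a b) :
    Ideal.span (Set.range (geomP k a b r)) = geomKer k a b r := by
  refine le_antisymm (span_le_ker a b r) ?_
  intro f hf
  obtain ⟨n, hn1, hn2⟩ := nf_exists a b r ha f
  have hnker : φm k a b r n = 0 := by
    have h1 : φm k a b r f = 0 := RingHom.mem_ker.mp hf
    have h2 : φm k a b r (f - n) = 0 := RingHom.mem_ker.mp (span_le_ker a b r hn2)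
    rw [map_sub] at h2
    have h3 : φm k a b r f = φm k a b r n := (sub_eq_zero.mp h2)
    rw [← h3, h1]
  have := normal_zero a b r ha hco n hn1 hnker
  rw [this] at hn2
  simpa using hn2


/-- the separating evaluation map for minimality -/
noncomputable def ψm (k : Type) [Field k] (a b r : ℕ) (i : Fin r) :
    MvPolynomial (Fin (r+1)) k →ₐ[k] Polynomial k :=
  MvPolynomial.aeval fun l : Fin (r + 1) =>
    (Polynomial.X : Polynomial k) ^
      ((if (l:ℕ) ≤ (i:ℕ) then 1 else 2) * (a ^ (r - (l:ℕ)) * b ^ (l:ℕ)))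

lemma psi_geomP_ne (i j : Fin r) (hne : j ≠ i) :
    ψm k a b r i (geomP k a b r j) = 0 := by
  rw [ψm, geomP, map_sub, map_pow, map_pow, aeval_X, aeval_X, ← pow_mul, ← pow_mul]
  have hval : (j:ℕ) ≠ (i:ℕ) := fun h => hne (Fin.ext h)
  have h2 : (((j.succ:ℕ)) ≤ (i:ℕ)) ↔ (((j.castSucc:ℕ)) ≤ (i:ℕ)) := by
    rw [Fin.val_succ, Fin.coe_castSucc]
    omega
  have hE := exp_eq a b r j
  simp only [mwt] at hE
  have hexp : (if ((j.succ:ℕ)) ≤ (i:ℕ) then 1 else 2) *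
        (a ^ (r - (j.succ:ℕ)) * b ^ (j.succ:ℕ)) * a
      = (if ((j.castSucc:ℕ)) ≤ (i:ℕ) then 1 else 2) *
        (a ^ (r - (j.castSucc:ℕ)) * b ^ (j.castSucc:ℕ)) * b := by
    rw [if_congr h2 rfl rfl, mul_assoc, hE, ← mul_assoc]
  rw [hexp, sub_self]

lemma psi_geomP_i_ne_zero (ha : 0 < a) (hb : 0 < b) (i : Fin r) :
    ψm k a b r i (geomP k a b r i) ≠ 0 := by
  rw [ψm, geomP, map_sub, map_pow, map_pow, aeval_X, aeval_X, ← pow_mul, ← pow_mul]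
  set N := a ^ (r - ((i.castSucc:ℕ))) * b ^ ((i.castSucc:ℕ)) * b with hN
  have hNpos : 0 < N := by
    apply Nat.mul_pos (Nat.mul_pos (Nat.pow_pos ha) (Nat.pow_pos hb)) hb
  have hc1 : ¬ ((i.succ:ℕ) ≤ (i:ℕ)) := by rw [Fin.val_succ]; omega
  have hc2 : ((i.castSucc:ℕ) ≤ (i:ℕ)) := by rw [Fin.coe_castSucc]
  have hE := exp_eq a b r i
  simp only [mwt] at hE
  have he1 : (if ((i.succ:ℕ)) ≤ (i:ℕ) then 1 else 2) *
      (a ^ (r - (i.succ:ℕ)) * b ^ (i.succ:ℕ)) * a = 2 * N := by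
    rw [if_neg hc1, mul_assoc, hE, hN]
  have he2 : (if ((i.castSucc:ℕ)) ≤ (i:ℕ) then 1 else 2) *
      (a ^ (r - (i.castSucc:ℕ)) * b ^ (i.castSucc:ℕ)) * b = N := by
    rw [if_pos hc2, hN]; ring
  rw [he1, he2]
  intro hzero
  have hcoe := congrArg (fun p => Polynomial.coeff p (2 * N)) hzero
  simp only [Polynomial.coeff_sub, Polynomial.coeff_X_pow, Polynomial.coeff_zero] at hcoe
  have hne2 : ¬ (2 * N = N) := by omega
  simp [hne2] at hcoe

lemma not_span_diff (ha : 0 < a) (hb : 0 < b) (hco : Nat.Coprime a b) (i : Fin r) :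
    Ideal.span (Set.range (geomP k a b r) \ {geomP k a b r i}) ≠ geomKer k a b r := by
  intro hEq
  have hPi_ker : geomP k a b r i ∈ geomKer k a b r :=
    span_le_ker a b r (Ideal.subset_span ⟨i, rfl⟩)
  rw [← hEq] at hPi_ker
  have hsub : Ideal.span (Set.range (geomP k a b r) \ {geomP k a b r i}) ≤
      RingHom.ker (ψm k a b r i) := by
    rw [Ideal.span_le]
    rintro g ⟨⟨j, rfl⟩, hg2⟩
    have hji : j ≠ i := by
      intro h
      exact hg2 (by rw [h]; rfl)
    exact RingHom.mem_ker.mpr (psi_geomP_ne a b r i j hji)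
  exact psi_geomP_i_ne_zero a b r ha hb i (RingHom.mem_ker.mp (hsub hPi_ker))

end GeomAux

open AffineSG MvPolynomial in
/-- The defining ideal `𝔭` of the monomial curve given by the numerical semigroup minimally
generated by the geometric sequence `a^r, a^{r-1}b, …, ab^{r-1}, b^r` is minimally generated
by the binomials `P_1 = z_2^a − z_1^b, …, P_r = z_{r+1}^a − z_r^b`. -/
theorem geom_minimally_generated {k : Type} [Field k] (a b r : ℕ)
    (ha : 0 < a) (hab : a < b) (hco : Nat.Coprime a b) (hr : 0 < r) :
    Ideal.span (Set.range (geomP k a b r)) = geomKer k a b r ∧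
      ∀ i : Fin r,
        Ideal.span (Set.range (geomP k a b r) \ {geomP k a b r i}) ≠ geomKer k a b r := by
  exact ⟨GeomAux.span_eq_ker a b r ha hco,
    fun i => GeomAux.not_span_diff a b r ha (by omega) hco i⟩
end
end
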